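/- Closedness of the τ-form for the degenerate Schlesinger system: let A_1, …, A_{N+2} : U → M_2(ℂ) be holomorphic maps solving the degenerate Schlesinger system S(1,…,1,2;N) on U, and suppose in addition that on U: tr A_1(t) = t_1; tr A_j = θ_j is a constant for j = 2, …, N+2; det A_j = 0 for j = 1, …, N+1; tr(A_1(t) A_{N+2}(t)) = t_1 θ_{N+2}; and −Σ_{j=2}^{N+2} A_j(t) equals the constant diagonal matrix diag(ρ, ρ + θ_{N+3}) for constants ρ, θ_{N+3} ∈ ℂ. Define holomorphic functions H_1, …, H_N on U by H_1 = −det(A_{N+2})/t_1 − Σ_{j=2}^{N+1} (tr(A_1 A_j) − t_1 θ_j)/(t_1 t_j) and, for i = 2, …, N, H_i = (tr(A_i A_1) − t_1 θ_i)/t_i² + Σ_{j=2, j≠i}^{N+2} (tr(A_i A_j) − θ_i θ_j)/(t_i − t_j) (where t_{N+1} = 1 and t_{N+2} = 0). Then the 1-form ω_0 = Σ_{i=1}^N H_i dt_i is closed, i.e. ∂H_i/∂t_j = ∂H_j/∂t_i on U for all 1 ≤ i, j ≤ N. -/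

import Mathlib

open Finset

/-- Entrywise partial derivative of a matrix-valued map in the `k`-th coordinate
direction. -/
noncomputable def pder {N : ℕ} (k : Fin N)
    (f : (Fin N → ℂ) → Matrix (Fin 2) (Fin 2) ℂ) (t : Fin N → ℂ) :
    Matrix (Fin 2) (Fin 2) ℂ :=
  Matrix.of fun a b => fderiv ℂ (fun s => f s a b) t (Pi.single k 1)

/-- Matrix commutator `[X, Y] = XY − YX`. -/
noncomputable def mComm (X Y : Matrix (Fin 2) (Fin 2) ℂ) : Matrix (Fin 2) (Fin 2) ℂ :=
  X * Y - Y * X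

/-- The value `t_j` for the classical index `j ∈ {1, …, N+2}`: the coordinate
`t ⟨j−1⟩` for `1 ≤ j ≤ N`, and the frozen values `t_{N+1} = 1`, `t_{N+2} = 0`. -/
def tval {N : ℕ} (t : Fin N → ℂ) (j : ℕ) : ℂ :=
  if h : 1 ≤ j ∧ j ≤ N then t ⟨j - 1, by omega⟩ else if j = N + 1 then 1 else 0

/-- The set of points `t ∈ ℂ^N` with `t_i ≠ 0`, `t_i ≠ 1` and `t_i ≠ t_j` for `i ≠ j`. -/
def goodDomain (N : ℕ) : Set (Fin N → ℂ) :=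
  {t | (∀ i, t i ≠ 0 ∧ t i ≠ 1) ∧ ∀ i j, i ≠ j → t i ≠ t j}

/-- `A 1, …, A (N+2) : U → M₂(ℂ)` solve the degenerate Schlesinger system
`S(1,…,1,2;N)`: each entry is holomorphic on `U`, and the partial differential
equations obtained by equating coefficients of `dt_1, …, dt_N` in
`dA_1 = Σ_{i=2}^{N+1} [A_i, A_1] d log t_i + (A_1 + [A_{N+2}, A_1]) d log t_1`,
`dA_j = Σ_{i=2,i≠j}^{N+2} [A_i, A_j] d log(t_j − t_i) + ([A_1,A_j]/t_j) d log(t_j/t_1)`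
for `j = 2, …, N+1`, and
`dA_{N+2} = Σ_{i=2}^{N+1} (([A_i,A_1]/t_i) d log(t_i/t_1) + [A_i,A_{N+2}] d log t_i)`
hold on `U` (with `t_{N+1} = 1`, `t_{N+2} = 0` held constant).  The coordinate
`k : Fin N` represents the variable `t_{k+1}`. -/
def SolvesDegSch {N : ℕ} (U : Set (Fin N → ℂ))
    (A : ℕ → (Fin N → ℂ) → Matrix (Fin 2) (Fin 2) ℂ) : Prop :=
  (∀ j ∈ Icc 1 (N + 2), ∀ a b : Fin 2, DifferentiableOn ℂ (fun t => A j t a b) U) ∧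
  ∀ t ∈ U, ∀ k : Fin N,
    (pder k (A 1) t =
      if (k : ℕ) = 0 then (t k)⁻¹ • (A 1 t + mComm (A (N + 2) t) (A 1 t))
      else (t k)⁻¹ • mComm (A ((k : ℕ) + 1) t) (A 1 t)) ∧
    (∀ j ∈ Icc 2 (N + 1),
      pder k (A j) t =
        if (k : ℕ) + 1 = j then
          (∑ i ∈ (Icc 2 (N + 2)).erase j,
            (tval t j - tval t i)⁻¹ • mComm (A i t) (A j t)) +
            ((tval t j) ^ 2)⁻¹ • mComm (A 1 t) (A j t)
        else if (k : ℕ) = 0 then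
          (-(tval t j * t k)⁻¹) • mComm (A 1 t) (A j t)
        else (-(tval t j - t k)⁻¹) • mComm (A ((k : ℕ) + 1) t) (A j t)) ∧
    (pder k (A (N + 2)) t =
      if (k : ℕ) = 0 then
        ∑ i ∈ Icc 2 (N + 1), (-(tval t i * t k)⁻¹) • mComm (A i t) (A 1 t)
      else ((t k) ^ 2)⁻¹ • mComm (A ((k : ℕ) + 1) t) (A 1 t) +
        (t k)⁻¹ • mComm (A ((k : ℕ) + 1) t) (A (N + 2) t))

/-- The Hamiltonians `H_1, …, H_N` of Proposition 2.1 (the coordinate `i : Fin N`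
represents the classical index `i+1`):
`H_1 = −det A_{N+2}/t_1 − Σ_{j=2}^{N+1} (tr(A_1 A_j) − t_1 θ_j)/(t_1 t_j)` and, for
`i = 2, …, N`,
`H_i = (tr(A_i A_1) − t_1 θ_i)/t_i² + Σ_{j=2,j≠i}^{N+2} (tr(A_i A_j) − θ_i θ_j)/(t_i − t_j)`. -/
noncomputable def degSchH {N : ℕ} (hN : 0 < N)
    (A : ℕ → (Fin N → ℂ) → Matrix (Fin 2) (Fin 2) ℂ) (θ : ℕ → ℂ)
    (i : Fin N) (t : Fin N → ℂ) : ℂ :=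
  if (i : ℕ) = 0 then
    -(A (N + 2) t).det / t i -
      ∑ j ∈ Icc 2 (N + 1), ((A 1 t * A j t).trace - t i * θ j) / (t i * tval t j)
  else
    ((A ((i : ℕ) + 1) t * A 1 t).trace - t ⟨0, hN⟩ * θ ((i : ℕ) + 1)) / (t i) ^ 2 +
      ∑ j ∈ (Icc 2 (N + 2)).erase ((i : ℕ) + 1),
        ((A ((i : ℕ) + 1) t * A j t).trace - θ ((i : ℕ) + 1) * θ j) / (t i - tval t j)

namespace DegSchAux

variable {N : ℕ}

/-- directional partial derivative of a scalar function -/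
noncomputable def pd (k : Fin N) (φ : (Fin N → ℂ) → ℂ) (t : Fin N → ℂ) : ℂ :=
  fderiv ℂ φ t (Pi.single k 1)

variable {t : Fin N → ℂ} {k : Fin N} {f g : (Fin N → ℂ) → ℂ}

lemma pd_add (hf : DifferentiableAt ℂ f t) (hg : DifferentiableAt ℂ g t) :
    pd k (fun s => f s + g s) t = pd k f t + pd k g t := by
  unfold pd; rw [fderiv_fun_add hf hg]; rfl

lemma pd_sub (hf : DifferentiableAt ℂ f t) (hg : DifferentiableAt ℂ g t) :
    pd k (fun s => f s - g s) t = pd k f t - pd k g t := by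
  unfold pd; rw [fderiv_fun_sub hf hg]; rfl

lemma pd_neg : pd k (fun s => -f s) t = - pd k f t := by
  unfold pd; rw [fderiv_fun_neg]; rfl

lemma pd_const (c : ℂ) : pd k (fun _ => c) t = 0 := by
  unfold pd; rw [fderiv_fun_const]; rfl

lemma pd_mul (hf : DifferentiableAt ℂ f t) (hg : DifferentiableAt ℂ g t) :
    pd k (fun s => f s * g s) t = pd k f t * g t + f t * pd k g t := by
  unfold pd; rw [fderiv_fun_mul hf hg]
  simp [smul_eq_mul]; ring

lemma pd_inv (hg : DifferentiableAt ℂ g t) (h0 : g t ≠ 0) :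
    pd k (fun s => (g s)⁻¹) t = -pd k g t / g t ^ 2 := by
  unfold pd
  have h1 : (fun s => (g s)⁻¹) = Inv.inv ∘ g := rfl
  rw [h1, fderiv_comp t (differentiableAt_inv h0) hg, fderiv_inv' h0]
  simp only [ContinuousLinearMap.comp_apply, ContinuousLinearMap.neg_apply,
    ContinuousLinearMap.mulLeftRight_apply]
  field_simp

lemma diffAt_div (hf : DifferentiableAt ℂ f t) (hg : DifferentiableAt ℂ g t) (h0 : g t ≠ 0) :
    DifferentiableAt ℂ (fun s => f s / g s) t := by
  have h1 : (fun s => f s / g s) = fun s => f s * (g s)⁻¹ := by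
    funext s; rw [div_eq_mul_inv]
  rw [h1]; exact hf.mul (hg.inv h0)

lemma pd_div (hf : DifferentiableAt ℂ f t) (hg : DifferentiableAt ℂ g t) (h0 : g t ≠ 0) :
    pd k (fun s => f s / g s) t = (pd k f t * g t - f t * pd k g t) / g t ^ 2 := by
  have h1 : (fun s => f s / g s) = fun s => f s * (g s)⁻¹ := by
    funext s; rw [div_eq_mul_inv]
  rw [h1, pd_mul hf (hg.fun_inv h0), pd_inv hg h0]
  field_simp
  ring

lemma pd_sum {ι : Type*} (s : Finset ι) (F : ι → (Fin N → ℂ) → ℂ)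
    (h : ∀ j ∈ s, DifferentiableAt ℂ (F j) t) :
    pd k (fun x => ∑ j ∈ s, F j x) t = ∑ j ∈ s, pd k (F j) t := by
  unfold pd; rw [fderiv_fun_sum h, ContinuousLinearMap.sum_apply]

lemma diffAt_coord (i : Fin N) : DifferentiableAt ℂ (fun s : Fin N → ℂ => s i) t :=
  (ContinuousLinearMap.proj (R := ℂ) (φ := fun _ : Fin N => ℂ) i).differentiableAt

lemma pd_coord (i : Fin N) : pd k (fun s => s i) t = if i = k then 1 else 0 := by
  unfold pd
  have h : fderiv ℂ (fun s : Fin N → ℂ => s i) t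
      = ContinuousLinearMap.proj (R := ℂ) (φ := fun _ : Fin N => ℂ) i :=
    (ContinuousLinearMap.proj (R := ℂ) (φ := fun _ : Fin N => ℂ) i).hasFDerivAt.fderiv
  rw [h]
  simp [Pi.single_apply]

lemma diffAt_tval (j : ℕ) : DifferentiableAt ℂ (fun s : Fin N → ℂ => tval s j) t := by
  unfold tval
  by_cases h : 1 ≤ j ∧ j ≤ N
  · simp only [dif_pos h]; exact diffAt_coord _
  · simp only [dif_neg h]; exact differentiableAt_const _

lemma pd_tval (j : ℕ) : pd k (fun s => tval s j) t = if j = (k : ℕ) + 1 then 1 else 0 := by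
  unfold tval
  by_cases h : 1 ≤ j ∧ j ≤ N
  · simp only [dif_pos h]
    rw [pd_coord]
    by_cases hjk : (⟨j - 1, by omega⟩ : Fin N) = k
    · rw [if_pos hjk, if_pos]
      have := congrArg Fin.val hjk
      simp at this; omega
    · rw [if_neg hjk, if_neg]
      intro hj
      exact hjk (Fin.ext (by simp; omega))
  · simp only [dif_neg h]
    rw [pd_const, eq_comm]
    rw [if_neg]
    intro hj
    exact h ⟨by omega, by have := k.isLt; omega⟩







/-- the fully antisymmetric triple trace -/
noncomputable def T (X Y Z : Matrix (Fin 2) (Fin 2) ℂ) : ℂ :=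
  (X * Y * Z).trace - (X * Z * Y).trace

lemma T_cyc (X Y Z : Matrix (Fin 2) (Fin 2) ℂ) : T X Y Z = T Y Z X := by
  unfold T
  rw [show X * Y * Z = X * (Y * Z) from mul_assoc _ _ _, Matrix.trace_mul_comm X (Y * Z),
    show X * Z * Y = X * (Z * Y) from mul_assoc _ _ _, Matrix.trace_mul_comm X (Z * Y)]
  rw [show Z * Y * X = Z * (Y * X) from mul_assoc _ _ _, Matrix.trace_mul_comm Z (Y * X)]

lemma T_swap (X Y Z : Matrix (Fin 2) (Fin 2) ℂ) : T X Z Y = - T X Y Z := by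
  unfold T; ring

lemma T_cyc' (X Y Z : Matrix (Fin 2) (Fin 2) ℂ) : T X Y Z = T Z X Y := by
  rw [T_cyc, T_cyc]

lemma T_rep₁ (X Y : Matrix (Fin 2) (Fin 2) ℂ) : T X X Y = 0 := by
  have h : T X X Y = - T X X Y := by
    calc T X X Y = - T X Y X := by rw [← T_swap]
    _ = - T X X Y := by rw [T_cyc X Y X, T_cyc Y X X]
  have h2 : (2:ℂ) * T X X Y = 0 := by linear_combination h
  simpa using h2

lemma T_rep₂ (X Y : Matrix (Fin 2) (Fin 2) ℂ) : T X Y X = 0 := by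
  rw [T_cyc']; exact T_rep₁ X Y

lemma T_rep₃ (X Y : Matrix (Fin 2) (Fin 2) ℂ) : T X Y Y = 0 := by
  rw [T_cyc]; exact T_rep₁ Y X

lemma trace_mComm_left (X Y B : Matrix (Fin 2) (Fin 2) ℂ) :
    (mComm X Y * B).trace = T B X Y := by
  unfold mComm T
  rw [Matrix.sub_mul, Matrix.trace_sub, Matrix.trace_mul_comm (X * Y) B,
    Matrix.trace_mul_comm (Y * X) B, ← mul_assoc, ← mul_assoc]

lemma trace_mComm_right (B X Y : Matrix (Fin 2) (Fin 2) ℂ) :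
    (B * mComm X Y).trace = T B X Y := by
  rw [Matrix.trace_mul_comm]; exact trace_mComm_left X Y B

lemma trace_mComm (X Y : Matrix (Fin 2) (Fin 2) ℂ) : (mComm X Y).trace = 0 := by
  unfold mComm
  rw [Matrix.trace_sub, Matrix.trace_mul_comm, sub_self]



variable {N : ℕ} {t : Fin N → ℂ} {k : Fin N}
variable {f g : (Fin N → ℂ) → Matrix (Fin 2) (Fin 2) ℂ}

lemma trace_mul_eq (f g : (Fin N → ℂ) → Matrix (Fin 2) (Fin 2) ℂ) :
    (fun s => (f s * g s).trace) =
      fun s => ∑ a : Fin 2, ∑ b : Fin 2, f s a b * g s b a := by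
  funext s
  simp [Matrix.trace, Matrix.diag, Matrix.mul_apply]

lemma diffAt_traceMul (hf : ∀ a b, DifferentiableAt ℂ (fun s => f s a b) t)
    (hg : ∀ a b, DifferentiableAt ℂ (fun s => g s a b) t) :
    DifferentiableAt ℂ (fun s => (f s * g s).trace) t := by
  rw [trace_mul_eq]
  exact DifferentiableAt.fun_sum fun a _ =>
    DifferentiableAt.fun_sum fun b _ => (hf a b).fun_mul (hg b a)

lemma pder_apply (a b : Fin 2) : pder k f t a b = pd k (fun s => f s a b) t := rfl

lemma pd_traceMul (hf : ∀ a b, DifferentiableAt ℂ (fun s => f s a b) t)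
    (hg : ∀ a b, DifferentiableAt ℂ (fun s => g s a b) t) :
    pd k (fun s => (f s * g s).trace) t =
      (pder k f t * g t).trace + (f t * pder k g t).trace := by
  rw [trace_mul_eq]
  rw [pd_sum _ _ (fun a _ => DifferentiableAt.fun_sum fun b _ => (hf a b).fun_mul (hg b a))]
  have h1 : ∀ a : Fin 2,
      pd k (fun s => ∑ b : Fin 2, f s a b * g s b a) t
        = ∑ b : Fin 2, (pder k f t a b * g t b a + f t a b * pder k g t b a) := by
    intro a
    rw [pd_sum _ _ (fun b _ => (hf a b).fun_mul (hg b a))]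
    exact Finset.sum_congr rfl fun b _ => pd_mul (hf a b) (hg b a)
  rw [Finset.sum_congr rfl fun a _ => h1 a]
  simp [Matrix.trace, Matrix.diag, Matrix.mul_apply, Finset.sum_add_distrib]

lemma diffAt_det (hf : ∀ a b, DifferentiableAt ℂ (fun s => f s a b) t) :
    DifferentiableAt ℂ (fun s => (f s).det) t := by
  have h : (fun s => (f s).det) =
      fun s => f s 0 0 * f s 1 1 - f s 0 1 * f s 1 0 :=
    funext fun s => Matrix.det_fin_two (f s)
  rw [h]
  exact (((hf 0 0).mul (hf 1 1)).sub ((hf 0 1).mul (hf 1 0)))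

lemma pd_det (hf : ∀ a b, DifferentiableAt ℂ (fun s => f s a b) t) :
    pd k (fun s => (f s).det) t =
      (f t).trace * (pder k f t).trace - (f t * pder k f t).trace := by
  have h : (fun s => (f s).det) =
      fun s => f s 0 0 * f s 1 1 - f s 0 1 * f s 1 0 :=
    funext fun s => Matrix.det_fin_two (f s)
  rw [h, pd_sub ((hf 0 0).fun_mul (hf 1 1)) ((hf 0 1).fun_mul (hf 1 0)),
    pd_mul (hf 0 0) (hf 1 1), pd_mul (hf 0 1) (hf 1 0)]
  simp only [Matrix.trace_fin_two, Matrix.mul_apply, Fin.sum_univ_two, pder_apply]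
  ring




variable {N : ℕ} {t : Fin N → ℂ} {k : Fin N}

lemma pd_coord_pow2 (i : Fin N) :
    pd k (fun s : Fin N → ℂ => s i ^ 2) t = 2 * t i * (if i = k then 1 else 0) := by
  have h : (fun s : Fin N → ℂ => s i ^ 2) = fun s => s i * s i := by
    funext s; ring
  rw [h, pd_mul (diffAt_coord i) (diffAt_coord i), pd_coord]; ring

lemma tval_of_le {j : ℕ} (h1 : 1 ≤ j) (h2 : j ≤ N) :
    tval t j = t ⟨j - 1, by omega⟩ := dif_pos ⟨h1, h2⟩

lemma tval_coe (i : Fin N) : tval t ((i : ℕ) + 1) = t i := by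
  rw [tval_of_le (by omega) (by have := i.isLt; omega)]
  congr 1

lemma tval_fun_coe (i : Fin N) :
    (fun s : Fin N → ℂ => tval s ((i : ℕ) + 1)) = fun s => s i := by
  funext s; exact tval_coe i

lemma tval_top : tval t (N + 1) = 1 := by
  unfold tval
  rw [dif_neg (by omega), if_pos rfl]

lemma tval_end : tval t (N + 2) = 0 := by
  unfold tval
  rw [dif_neg (by omega), if_neg (by omega)]

lemma tval_fun_end : (fun s : Fin N → ℂ => tval s (N + 2)) = fun _ => 0 := by
  funext s; exact tval_end

section good
variable (hgd : t ∈ goodDomain N)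
include hgd

lemma gd_ne_zero (i : Fin N) : t i ≠ 0 := (hgd.1 i).1

lemma gd_tval_ne_zero {j : ℕ} (h1 : 1 ≤ j) (h2 : j ≤ N + 1) : tval t j ≠ 0 := by
  by_cases h : j ≤ N
  · rw [tval_of_le h1 h]; exact (hgd.1 _).1
  · have : j = N + 1 := by omega
    subst this; rw [tval_top]; exact one_ne_zero

lemma gd_sub_ne_zero {j : ℕ} (a : Fin N) (h1 : 1 ≤ j) (h2 : j ≤ N + 1)
    (hne : (a : ℕ) + 1 ≠ j) : t a - tval t j ≠ 0 := by
  by_cases h : j ≤ N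
  · rw [tval_of_le h1 h]
    refine sub_ne_zero.mpr (hgd.2 a ⟨j - 1, by omega⟩ ?_)
    intro hc
    exact hne (by have := congrArg Fin.val hc; simp at this; omega)
  · have : j = N + 1 := by omega
    subst this; rw [tval_top]
    exact sub_ne_zero.mpr (hgd.1 a).2

lemma gd_coord_sub_ne_zero {a b : Fin N} (h : a ≠ b) : t a - t b ≠ 0 :=
  sub_ne_zero.mpr (hgd.2 a b h)

end good







lemma trace_smul_mComm_mul (c : ℂ) (X Y B : Matrix (Fin 2) (Fin 2) ℂ) :
    ((c • mComm X Y) * B).trace = c * T B X Y := by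
  rw [Matrix.smul_mul, Matrix.trace_smul, smul_eq_mul, trace_mComm_left]

lemma trace_mul_smul_mComm (c : ℂ) (B X Y : Matrix (Fin 2) (Fin 2) ℂ) :
    (B * (c • mComm X Y)).trace = c * T B X Y := by
  rw [Matrix.mul_smul, Matrix.trace_smul, smul_eq_mul, trace_mComm_right]

lemma keyRest (x y C D : ℂ) (hx : x ≠ 0) (hy : y ≠ 0) (hxy : x - y ≠ 0) :
    (C/(x-y) + C/y)/x^2 + (D/y - C/y^2)/(x-y) + (-(D/(x-y)) + C/y^2 - D/y)/x = 0 := by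
  rw [div_add_div _ _ hxy hy, div_sub_div _ _ hy (pow_ne_zero 2 hy), ← neg_div,
    div_add_div _ _ hxy (pow_ne_zero 2 hy), div_sub_div _ _ (mul_ne_zero hxy (pow_ne_zero 2 hy)) hy,
    div_div, div_div, div_div,
    div_add_div _ _ (mul_ne_zero (mul_ne_zero hxy hy) (pow_ne_zero 2 hx))
      (mul_ne_zero (mul_ne_zero hy (pow_ne_zero 2 hy)) hxy),
    div_add_div _ _ (mul_ne_zero (mul_ne_zero (mul_ne_zero hxy hy) (pow_ne_zero 2 hx))
      (mul_ne_zero (mul_ne_zero hy (pow_ne_zero 2 hy)) hxy))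
      (mul_ne_zero (mul_ne_zero (mul_ne_zero hxy (pow_ne_zero 2 hy)) hy) hx),
    div_eq_iff (mul_ne_zero (mul_ne_zero (mul_ne_zero (mul_ne_zero hxy hy) (pow_ne_zero 2 hx))
      (mul_ne_zero (mul_ne_zero hy (pow_ne_zero 2 hy)) hxy))
      (mul_ne_zero (mul_ne_zero (mul_ne_zero hxy (pow_ne_zero 2 hy)) hy) hx))]
  ring

variable {N : ℕ}

lemma L1 {U : Set (Fin N → ℂ)} (hUopen : IsOpen U)
    {A : ℕ → (Fin N → ℂ) → Matrix (Fin 2) (Fin 2) ℂ} {θ : ℕ → ℂ}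
    (hsol : SolvesDegSch U A) {t : Fin N → ℂ} (ht : t ∈ U) (hgd : t ∈ goodDomain N)
    (hN : 0 < N) (i k : Fin N) (hi : (i : ℕ) ≠ 0) (hk : (k : ℕ) ≠ 0) (hik : i ≠ k) :
    fderiv ℂ (degSchH hN A θ i) t (Pi.single k 1) =
      ((A ((i : ℕ) + 1) t * A ((k : ℕ) + 1) t).trace - θ ((i : ℕ) + 1) * θ ((k : ℕ) + 1))
        / (t i - t k) ^ 2 := by
  have hiN : (i : ℕ) < N := i.isLt
  have hkN : (k : ℕ) < N := k.isLt
  have hink : (i : ℕ) ≠ (k : ℕ) := fun h => hik (Fin.ext h)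
  -- differentiability of entries
  have hdA : ∀ j, 1 ≤ j → j ≤ N + 2 → ∀ a b : Fin 2,
      DifferentiableAt ℂ (fun s => A j s a b) t := fun j h1 h2 a b =>
    (hsol.1 j (mem_Icc.mpr ⟨h1, h2⟩) a b).differentiableAt (hUopen.mem_nhds ht)
  have dTr : ∀ p q, 1 ≤ p → p ≤ N + 2 → 1 ≤ q → q ≤ N + 2 →
      DifferentiableAt ℂ (fun s => (A p s * A q s).trace) t := fun p q h1 h2 h3 h4 =>
    diffAt_traceMul (hdA p h1 h2) (hdA q h3 h4)
  -- PDE equations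
  obtain ⟨hP1, hPj, hPN2⟩ := hsol.2 t ht k
  have hP1' : pder k (A 1) t = (t k)⁻¹ • mComm (A ((k : ℕ) + 1) t) (A 1 t) := by
    rw [hP1, if_neg hk]
  have hPm : pder k (A ((i : ℕ) + 1)) t
      = (-(t i - t k)⁻¹) • mComm (A ((k : ℕ) + 1) t) (A ((i : ℕ) + 1) t) := by
    have h := hPj ((i : ℕ) + 1) (mem_Icc.mpr ⟨by omega, by omega⟩)
    rw [h, if_neg (by omega), if_neg hk, tval_coe i]
  have hPn : pder k (A ((k : ℕ) + 1)) t
      = (∑ l ∈ (Icc 2 (N + 2)).erase ((k : ℕ) + 1),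
          (t k - tval t l)⁻¹ • mComm (A l t) (A ((k : ℕ) + 1) t))
        + ((t k) ^ 2)⁻¹ • mComm (A 1 t) (A ((k : ℕ) + 1) t) := by
    have h := hPj ((k : ℕ) + 1) (mem_Icc.mpr ⟨by omega, by omega⟩)
    rw [h, if_pos rfl, tval_coe k]
  have hPgen : ∀ j, 2 ≤ j → j ≤ N + 1 → j ≠ (k : ℕ) + 1 →
      pder k (A j) t = (-(tval t j - t k)⁻¹) • mComm (A ((k : ℕ) + 1) t) (A j t) := by
    intro j h2 h3 h4
    rw [hPj j (mem_Icc.mpr ⟨h2, h3⟩), if_neg (fun h => h4 h.symm), if_neg hk]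
  have hPN2' : pder k (A (N + 2)) t
      = ((t k) ^ 2)⁻¹ • mComm (A ((k : ℕ) + 1) t) (A 1 t)
        + (t k)⁻¹ • mComm (A ((k : ℕ) + 1) t) (A (N + 2) t) := by
    rw [hPN2, if_neg hk]
  -- nonvanishing
  have hti : t i ≠ 0 := gd_ne_zero hgd i
  have htk : t k ≠ 0 := gd_ne_zero hgd k
  have htik : t i - t k ≠ 0 := gd_coord_sub_ne_zero hgd hik
  have hden1 : t i ^ 2 ≠ 0 := pow_ne_zero _ hti
  -- rewrite H
  have hH : degSchH hN A θ i = fun s =>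
      ((A ((i : ℕ) + 1) s * A 1 s).trace - s ⟨0, hN⟩ * θ ((i : ℕ) + 1)) / s i ^ 2 +
        ∑ j ∈ (Icc 2 (N + 2)).erase ((i : ℕ) + 1),
          ((A ((i : ℕ) + 1) s * A j s).trace - θ ((i : ℕ) + 1) * θ j) / (s i - tval s j) := by
    funext s
    simp only [degSchH]
    rw [if_neg hi]
  -- differentiability of pieces
  have dnum1 : DifferentiableAt ℂ
      (fun s => (A ((i : ℕ) + 1) s * A 1 s).trace - s ⟨0, hN⟩ * θ ((i : ℕ) + 1)) t :=
    (dTr _ _ (by omega) (by omega) (by omega) (by omega)).sub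
      ((diffAt_coord _).mul (differentiableAt_const _))
  have dden1 : DifferentiableAt ℂ (fun s : Fin N → ℂ => s i ^ 2) t := (diffAt_coord i).pow 2
  have dF : DifferentiableAt ℂ (fun s =>
      ((A ((i : ℕ) + 1) s * A 1 s).trace - s ⟨0, hN⟩ * θ ((i : ℕ) + 1)) / s i ^ 2) t :=
    diffAt_div dnum1 dden1 hden1
  have hdenj : ∀ j ∈ (Icc 2 (N + 2)).erase ((i : ℕ) + 1), t i - tval t j ≠ 0 := by
    intro j hj
    rw [mem_erase, mem_Icc] at hj
    by_cases hN2 : j = N + 2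
    · subst hN2; rw [tval_end, sub_zero]; exact hti
    · exact gd_sub_ne_zero hgd i (by omega) (by omega) (by omega)
  have dG : ∀ j ∈ (Icc 2 (N + 2)).erase ((i : ℕ) + 1), DifferentiableAt ℂ
      (fun s => ((A ((i : ℕ) + 1) s * A j s).trace - θ ((i : ℕ) + 1) * θ j)
        / (s i - tval s j)) t := by
    intro j hj
    have hj' := hj
    rw [mem_erase, mem_Icc] at hj'
    exact diffAt_div ((dTr _ _ (by omega) (by omega) (by omega) (by omega)).sub
      (differentiableAt_const _)) ((diffAt_coord i).sub (diffAt_tval j)) (hdenj j hj)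
  -- start computing
  show pd k (degSchH hN A θ i) t = _
  rw [hH, pd_add dF (DifferentiableAt.fun_sum dG), pd_sum _ _ dG,
    pd_div dnum1 dden1 hden1]
  -- peel j = k+1 and j = N+2 from the outer sum
  have hnS : (k : ℕ) + 1 ∈ (Icc 2 (N + 2)).erase ((i : ℕ) + 1) := by
    rw [mem_erase, mem_Icc]; omega
  have hN2S : N + 2 ∈ ((Icc 2 (N + 2)).erase ((i : ℕ) + 1)).erase ((k : ℕ) + 1) := by
    rw [mem_erase, mem_erase, mem_Icc]; omega
  rw [← Finset.sum_erase_add _ _ hnS, ← Finset.sum_erase_add _ _ hN2S]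
  have h0k : ¬((⟨0, hN⟩ : Fin N) = k) := fun h => hk ((congrArg Fin.val h).symm)
  -- derivative of the first numerator
  have hpdF : pd k (fun s => (A ((i : ℕ) + 1) s * A 1 s).trace
      - s ⟨0, hN⟩ * θ ((i : ℕ) + 1)) t
      = T (A 1 t) (A ((i : ℕ) + 1) t) (A ((k : ℕ) + 1) t) / (t i - t k)
        + T (A 1 t) (A ((i : ℕ) + 1) t) (A ((k : ℕ) + 1) t) / t k := by
    rw [pd_sub (dTr _ _ (by omega) (by omega) (by omega) (by omega))
        ((diffAt_coord _).fun_mul (differentiableAt_const _)),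
      pd_traceMul (hdA _ (by omega) (by omega)) (hdA _ (by omega) (by omega)),
      hPm, hP1', pd_mul (diffAt_coord _) (differentiableAt_const _), pd_const, pd_coord,
      trace_smul_mComm_mul, trace_mul_smul_mComm, if_neg h0k,
      T_swap (A 1 t) (A ((i : ℕ) + 1) t) (A ((k : ℕ) + 1) t),
      T_cyc' (A ((i : ℕ) + 1) t) (A ((k : ℕ) + 1) t) (A 1 t)]
    simp only [div_eq_mul_inv]
    ring
  have hpdden1 : pd k (fun s : Fin N → ℂ => s i ^ 2) t = 0 := by
    rw [pd_coord_pow2, if_neg hik]; ring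
  -- the generic terms of the outer sum
  have hGj : ∀ j ∈ (((Icc 2 (N + 2)).erase ((i : ℕ) + 1)).erase ((k : ℕ) + 1)).erase (N + 2),
      pd k (fun s => ((A ((i : ℕ) + 1) s * A j s).trace - θ ((i : ℕ) + 1) * θ j)
        / (s i - tval s j)) t
      = ((tval t j - t k)⁻¹ - (t i - t k)⁻¹)
          * T (A ((i : ℕ) + 1) t) (A j t) (A ((k : ℕ) + 1) t) / (t i - tval t j) := by
    intro j hj
    rw [mem_erase, mem_erase, mem_erase, mem_Icc] at hj
    obtain ⟨hjN2, hjn, hjm, hj2, hjle⟩ := hj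
    have hjmem : j ∈ (Icc 2 (N + 2)).erase ((i : ℕ) + 1) := by
      rw [mem_erase, mem_Icc]; omega
    have hne := hdenj j hjmem
    rw [pd_div ((dTr _ _ (by omega) (by omega) (by omega) (by omega)).fun_sub
        (differentiableAt_const _)) ((diffAt_coord i).fun_sub (diffAt_tval j)) hne,
      pd_sub (dTr _ _ (by omega) (by omega) (by omega) (by omega)) (differentiableAt_const _),
      pd_const, pd_traceMul (hdA _ (by omega) (by omega)) (hdA _ (by omega) (by omega)),
      hPm, hPgen j (by omega) (by omega) (by omega),
      pd_sub (diffAt_coord i) (diffAt_tval j), pd_coord, pd_tval,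
      if_neg hik, if_neg (show ¬ j = (k : ℕ) + 1 by omega),
      trace_smul_mComm_mul, trace_mul_smul_mComm,
      T_cyc' (A j t) (A ((k : ℕ) + 1) t) (A ((i : ℕ) + 1) t),
      T_swap (A ((i : ℕ) + 1) t) (A j t) (A ((k : ℕ) + 1) t)]
    field_simp
    ring
  -- the j = N+2 term
  have hGN2 : pd k (fun s => ((A ((i : ℕ) + 1) s * A (N + 2) s).trace
        - θ ((i : ℕ) + 1) * θ (N + 2)) / (s i - tval s (N + 2))) t
      = (-(T (A ((i : ℕ) + 1) t) (A (N + 2) t) (A ((k : ℕ) + 1) t) / (t i - t k))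
          + T (A 1 t) (A ((i : ℕ) + 1) t) (A ((k : ℕ) + 1) t) / t k ^ 2
          - T (A ((i : ℕ) + 1) t) (A (N + 2) t) (A ((k : ℕ) + 1) t) / t k) / t i := by
    have hneN2 : t i - tval t (N + 2) ≠ 0 := by
      rw [tval_end, sub_zero]; exact hti
    rw [pd_div ((dTr _ _ (by omega) (by omega) (by omega) (by omega)).fun_sub
        (differentiableAt_const _)) ((diffAt_coord i).fun_sub (diffAt_tval (N + 2))) hneN2,
      pd_sub (dTr _ _ (by omega) (by omega) (by omega) (by omega)) (differentiableAt_const _),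
      pd_const, pd_traceMul (hdA _ (by omega) (by omega)) (hdA _ (by omega) (by omega)),
      hPm, hPN2', pd_sub (diffAt_coord i) (diffAt_tval (N + 2)), pd_coord, pd_tval,
      if_neg hik, if_neg (show ¬ N + 2 = (k : ℕ) + 1 by omega)]
    simp only [Matrix.mul_add, Matrix.trace_add, trace_smul_mComm_mul, trace_mul_smul_mComm]
    rw [T_cyc' (A (N + 2) t) (A ((k : ℕ) + 1) t) (A ((i : ℕ) + 1) t),
      T_swap (A ((i : ℕ) + 1) t) (A (N + 2) t) (A ((k : ℕ) + 1) t),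
      T_cyc' (A ((i : ℕ) + 1) t) (A ((k : ℕ) + 1) t) (A 1 t)]
    simp only [tval_end, sub_zero]
    rw [div_eq_div_iff (pow_ne_zero 2 hti) hti]
    ring
  -- the j = k+1 term
  have hGn : pd k (fun s => ((A ((i : ℕ) + 1) s * A ((k : ℕ) + 1) s).trace
        - θ ((i : ℕ) + 1) * θ ((k : ℕ) + 1)) / (s i - tval s ((k : ℕ) + 1))) t
      = (∑ l ∈ (((Icc 2 (N + 2)).erase ((i : ℕ) + 1)).erase ((k : ℕ) + 1)).erase (N + 2),
            (t k - tval t l)⁻¹ * T (A ((i : ℕ) + 1) t) (A l t) (A ((k : ℕ) + 1) t))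
          / (t i - t k)
        + (T (A ((i : ℕ) + 1) t) (A (N + 2) t) (A ((k : ℕ) + 1) t) / t k
            - T (A 1 t) (A ((i : ℕ) + 1) t) (A ((k : ℕ) + 1) t) / t k ^ 2)
          / (t i - t k)
        + ((A ((i : ℕ) + 1) t * A ((k : ℕ) + 1) t).trace - θ ((i : ℕ) + 1) * θ ((k : ℕ) + 1))
          / (t i - t k) ^ 2 := by
    have hnen : t i - tval t ((k : ℕ) + 1) ≠ 0 := hdenj _ hnS
    rw [pd_div ((dTr _ _ (by omega) (by omega) (by omega) (by omega)).fun_sub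
        (differentiableAt_const _)) ((diffAt_coord i).fun_sub (diffAt_tval ((k : ℕ) + 1))) hnen,
      pd_sub (dTr _ _ (by omega) (by omega) (by omega) (by omega)) (differentiableAt_const _),
      pd_const, pd_traceMul (hdA _ (by omega) (by omega)) (hdA _ (by omega) (by omega)),
      hPm, hPn, pd_sub (diffAt_coord i) (diffAt_tval ((k : ℕ) + 1)), pd_coord, pd_tval,
      if_neg hik, if_pos rfl]
    simp only [Matrix.mul_add, Matrix.trace_add, Finset.mul_sum, Matrix.trace_sum,
      trace_smul_mComm_mul, trace_mul_smul_mComm]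
    -- peel l = i+1 and l = N+2 from the inner sum
    have hmS' : (i : ℕ) + 1 ∈ (Icc 2 (N + 2)).erase ((k : ℕ) + 1) := by
      rw [mem_erase, mem_Icc]; omega
    have hN2S' : N + 2 ∈ ((Icc 2 (N + 2)).erase ((k : ℕ) + 1)).erase ((i : ℕ) + 1) := by
      rw [mem_erase, mem_erase, mem_Icc]; omega
    rw [← Finset.sum_erase_add _ _ hmS', ← Finset.sum_erase_add _ _ hN2S',
      Finset.erase_right_comm (s := Icc 2 (N + 2)) (a := (k : ℕ) + 1) (b := (i : ℕ) + 1),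
      T_rep₁ (A ((i : ℕ) + 1) t) (A ((k : ℕ) + 1) t),
      T_rep₁ (A ((k : ℕ) + 1) t) (A ((i : ℕ) + 1) t),
      T_swap (A ((i : ℕ) + 1) t) (A ((k : ℕ) + 1) t) (A 1 t),
      T_cyc' (A ((i : ℕ) + 1) t) (A ((k : ℕ) + 1) t) (A 1 t)]
    simp only [tval_coe, tval_end, sub_zero]
    rw [← add_div, div_add_div _ _ htik (pow_ne_zero 2 htik),
      div_eq_div_iff (pow_ne_zero 2 htik) (mul_ne_zero htik (pow_ne_zero 2 htik))]
    ring
  -- the sum of the generic terms cancels against the inner sum of the j = k+1 term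
  have hsum0 : (∑ l ∈ (((Icc 2 (N + 2)).erase ((i : ℕ) + 1)).erase ((k : ℕ) + 1)).erase (N + 2),
        (t k - tval t l)⁻¹ * T (A ((i : ℕ) + 1) t) (A l t) (A ((k : ℕ) + 1) t)) / (t i - t k)
      + ∑ j ∈ (((Icc 2 (N + 2)).erase ((i : ℕ) + 1)).erase ((k : ℕ) + 1)).erase (N + 2),
          ((tval t j - t k)⁻¹ - (t i - t k)⁻¹)
            * T (A ((i : ℕ) + 1) t) (A j t) (A ((k : ℕ) + 1) t) / (t i - tval t j) = 0 := by
    rw [Finset.sum_div, ← Finset.sum_add_distrib]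
    refine Finset.sum_eq_zero fun j hj => ?_
    rw [mem_erase, mem_erase, mem_erase, mem_Icc] at hj
    obtain ⟨hjN2, hjn, hjm, hj2, hjle⟩ := hj
    have h1 : t i - tval t j ≠ 0 :=
      gd_sub_ne_zero hgd i (by omega) (by omega) (by omega)
    have h2 : t k - tval t j ≠ 0 :=
      gd_sub_ne_zero hgd k (by omega) (by omega) (by omega)
    have h2' : tval t j - t k ≠ 0 := fun h => h2 (by linear_combination -h)
    field_simp
    ring
  rw [hpdF, hpdden1, Finset.sum_congr rfl hGj, hGN2, hGn]
  have hclean : ∀ X Q : ℂ, (X * t i ^ 2 - Q * 0) / (t i ^ 2) ^ 2 = X / t i ^ 2 := by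
    intro X Q
    rw [div_eq_div_iff (pow_ne_zero 2 hden1) hden1]
    ring
  rw [hclean]
  linear_combination hsum0 +
    keyRest (t i) (t k) (T (A 1 t) (A ((i : ℕ) + 1) t) (A ((k : ℕ) + 1) t))
      (T (A ((i : ℕ) + 1) t) (A (N + 2) t) (A ((k : ℕ) + 1) t)) hti htk htik



lemma L2a {U : Set (Fin N → ℂ)} (hUopen : IsOpen U)
    {A : ℕ → (Fin N → ℂ) → Matrix (Fin 2) (Fin 2) ℂ} {θ : ℕ → ℂ}
    (hsol : SolvesDegSch U A) {t : Fin N → ℂ} (ht : t ∈ U) (hgd : t ∈ goodDomain N)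
    (hN : 0 < N) (i : Fin N) (hi : (i : ℕ) ≠ 0) :
    fderiv ℂ (degSchH hN A θ i) t (Pi.single (⟨0, hN⟩ : Fin N) 1) =
      ((A ((i : ℕ) + 1) t * A 1 t).trace - t ⟨0, hN⟩ * θ ((i : ℕ) + 1))
        / (t ⟨0, hN⟩ * t i ^ 2) := by
  have hiN : (i : ℕ) < N := i.isLt
  have hdA : ∀ j, 1 ≤ j → j ≤ N + 2 → ∀ a b : Fin 2,
      DifferentiableAt ℂ (fun s => A j s a b) t := fun j h1 h2 a b =>
    (hsol.1 j (mem_Icc.mpr ⟨h1, h2⟩) a b).differentiableAt (hUopen.mem_nhds ht)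
  have dTr : ∀ p q, 1 ≤ p → p ≤ N + 2 → 1 ≤ q → q ≤ N + 2 →
      DifferentiableAt ℂ (fun s => (A p s * A q s).trace) t := fun p q h1 h2 h3 h4 =>
    diffAt_traceMul (hdA p h1 h2) (hdA q h3 h4)
  obtain ⟨hP1, hPj, hPN2⟩ := hsol.2 t ht (⟨0, hN⟩ : Fin N)
  have hk0 : ((⟨0, hN⟩ : Fin N) : ℕ) = 0 := rfl
  have hP1' : pder (⟨0, hN⟩ : Fin N) (A 1) t
      = (t ⟨0, hN⟩)⁻¹ • (A 1 t + mComm (A (N + 2) t) (A 1 t)) := by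
    rw [hP1, if_pos hk0]
  have hPgen : ∀ j, 2 ≤ j → j ≤ N + 1 →
      pder (⟨0, hN⟩ : Fin N) (A j) t
        = (-(tval t j * t ⟨0, hN⟩)⁻¹) • mComm (A 1 t) (A j t) := by
    intro j h2 h3
    rw [hPj j (mem_Icc.mpr ⟨h2, h3⟩), if_neg (by omega), if_pos hk0]
  have hPN2' : pder (⟨0, hN⟩ : Fin N) (A (N + 2)) t
      = ∑ l ∈ Icc 2 (N + 1), (-(tval t l * t ⟨0, hN⟩)⁻¹) • mComm (A l t) (A 1 t) := by
    rw [hPN2, if_pos hk0]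
  have hti : t i ≠ 0 := gd_ne_zero hgd i
  have ht0 : t ⟨0, hN⟩ ≠ 0 := gd_ne_zero hgd _
  have hden1 : t i ^ 2 ≠ 0 := pow_ne_zero _ hti
  have hik0 : ¬ i = (⟨0, hN⟩ : Fin N) := fun h => hi (congrArg Fin.val h)
  have hH : degSchH hN A θ i = fun s =>
      ((A ((i : ℕ) + 1) s * A 1 s).trace - s ⟨0, hN⟩ * θ ((i : ℕ) + 1)) / s i ^ 2 +
        ∑ j ∈ (Icc 2 (N + 2)).erase ((i : ℕ) + 1),
          ((A ((i : ℕ) + 1) s * A j s).trace - θ ((i : ℕ) + 1) * θ j) / (s i - tval s j) := by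
    funext s
    simp only [degSchH]
    rw [if_neg hi]
  have dnum1 : DifferentiableAt ℂ
      (fun s => (A ((i : ℕ) + 1) s * A 1 s).trace - s ⟨0, hN⟩ * θ ((i : ℕ) + 1)) t :=
    (dTr _ _ (by omega) (by omega) (by omega) (by omega)).sub
      ((diffAt_coord _).mul (differentiableAt_const _))
  have dden1 : DifferentiableAt ℂ (fun s : Fin N → ℂ => s i ^ 2) t := (diffAt_coord i).pow 2
  have dF : DifferentiableAt ℂ (fun s =>
      ((A ((i : ℕ) + 1) s * A 1 s).trace - s ⟨0, hN⟩ * θ ((i : ℕ) + 1)) / s i ^ 2) t :=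
    diffAt_div dnum1 dden1 hden1
  have hdenj : ∀ j ∈ (Icc 2 (N + 2)).erase ((i : ℕ) + 1), t i - tval t j ≠ 0 := by
    intro j hj
    rw [mem_erase, mem_Icc] at hj
    by_cases hN2 : j = N + 2
    · subst hN2; rw [tval_end, sub_zero]; exact hti
    · exact gd_sub_ne_zero hgd i (by omega) (by omega) (by omega)
  have dG : ∀ j ∈ (Icc 2 (N + 2)).erase ((i : ℕ) + 1), DifferentiableAt ℂ
      (fun s => ((A ((i : ℕ) + 1) s * A j s).trace - θ ((i : ℕ) + 1) * θ j)
        / (s i - tval s j)) t := by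
    intro j hj
    have hj' := hj
    rw [mem_erase, mem_Icc] at hj'
    exact diffAt_div ((dTr _ _ (by omega) (by omega) (by omega) (by omega)).sub
      (differentiableAt_const _)) ((diffAt_coord i).sub (diffAt_tval j)) (hdenj j hj)
  show pd (⟨0, hN⟩ : Fin N) (degSchH hN A θ i) t = _
  rw [hH, pd_add dF (DifferentiableAt.fun_sum dG), pd_sum _ _ dG,
    pd_div dnum1 dden1 hden1]
  have hN2S : N + 2 ∈ (Icc 2 (N + 2)).erase ((i : ℕ) + 1) := by
    rw [mem_erase, mem_Icc]; omega
  rw [← Finset.sum_erase_add _ _ hN2S]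
  have hsets : ((Icc 2 (N + 2)).erase ((i : ℕ) + 1)).erase (N + 2)
      = (Icc 2 (N + 1)).erase ((i : ℕ) + 1) := by
    ext x
    simp only [mem_erase, mem_Icc]
    omega
  rw [hsets]
  -- numerator of the first term
  have hpdF : pd (⟨0, hN⟩ : Fin N) (fun s => (A ((i : ℕ) + 1) s * A 1 s).trace
      - s ⟨0, hN⟩ * θ ((i : ℕ) + 1)) t
      = ((A ((i : ℕ) + 1) t * A 1 t).trace
          + T (A ((i : ℕ) + 1) t) (A (N + 2) t) (A 1 t)) / t ⟨0, hN⟩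
        - θ ((i : ℕ) + 1) := by
    rw [pd_sub (dTr _ _ (by omega) (by omega) (by omega) (by omega))
        ((diffAt_coord _).fun_mul (differentiableAt_const _)),
      pd_traceMul (hdA _ (by omega) (by omega)) (hdA _ (by omega) (by omega)),
      hPgen _ (by omega) (by omega), hP1',
      pd_mul (diffAt_coord _) (differentiableAt_const _), pd_const, pd_coord,
      trace_smul_mComm_mul, if_pos rfl, Matrix.mul_smul, Matrix.trace_smul, smul_eq_mul,
      Matrix.mul_add, Matrix.trace_add, trace_mComm_right,
      T_rep₁ (A 1 t) (A ((i : ℕ) + 1) t)]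
    simp only [tval_coe, div_eq_mul_inv]
    ring
  have hpdden1 : pd (⟨0, hN⟩ : Fin N) (fun s : Fin N → ℂ => s i ^ 2) t = 0 := by
    rw [pd_coord_pow2, if_neg hik0]; ring
  -- generic sum terms
  have hGj : ∀ j ∈ (Icc 2 (N + 1)).erase ((i : ℕ) + 1),
      pd (⟨0, hN⟩ : Fin N) (fun s => ((A ((i : ℕ) + 1) s * A j s).trace
          - θ ((i : ℕ) + 1) * θ j) / (s i - tval s j)) t
      = (T (A ((i : ℕ) + 1) t) (A j t) (A 1 t) / (tval t j * t ⟨0, hN⟩)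
          - T (A ((i : ℕ) + 1) t) (A j t) (A 1 t) / (t i * t ⟨0, hN⟩))
        / (t i - tval t j) := by
    intro j hj
    rw [mem_erase, mem_Icc] at hj
    obtain ⟨hjm, hj2, hjle⟩ := hj
    have hjmem : j ∈ (Icc 2 (N + 2)).erase ((i : ℕ) + 1) := by
      rw [mem_erase, mem_Icc]; omega
    have hne := hdenj j hjmem
    rw [pd_div ((dTr _ _ (by omega) (by omega) (by omega) (by omega)).fun_sub
        (differentiableAt_const _)) ((diffAt_coord i).fun_sub (diffAt_tval j)) hne,
      pd_sub (dTr _ _ (by omega) (by omega) (by omega) (by omega)) (differentiableAt_const _),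
      pd_const, pd_traceMul (hdA _ (by omega) (by omega)) (hdA _ (by omega) (by omega)),
      hPgen _ (by omega) (by omega), hPgen j (by omega) (by omega),
      pd_sub (diffAt_coord i) (diffAt_tval j), pd_coord, pd_tval,
      if_neg hik0, if_neg (show ¬ j = ((⟨0, hN⟩ : Fin N) : ℕ) + 1 by omega),
      trace_smul_mComm_mul, trace_mul_smul_mComm,
      T_cyc' (A j t) (A 1 t) (A ((i : ℕ) + 1) t),
      T_swap (A ((i : ℕ) + 1) t) (A j t) (A 1 t)]
    simp only [tval_coe]
    rw [div_eq_div_iff (pow_ne_zero 2 hne) hne]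
    ring
  -- the j = N+2 term
  have hGN2 : pd (⟨0, hN⟩ : Fin N) (fun s => ((A ((i : ℕ) + 1) s * A (N + 2) s).trace
        - θ ((i : ℕ) + 1) * θ (N + 2)) / (s i - tval s (N + 2))) t
      = (-(T (A ((i : ℕ) + 1) t) (A (N + 2) t) (A 1 t) / (t i * t ⟨0, hN⟩))
          + ∑ l ∈ (Icc 2 (N + 1)).erase ((i : ℕ) + 1),
            -(tval t l * t ⟨0, hN⟩)⁻¹ * T (A ((i : ℕ) + 1) t) (A l t) (A 1 t)) / t i := by
    have hneN2 : t i - tval t (N + 2) ≠ 0 := by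
      rw [tval_end, sub_zero]; exact hti
    rw [pd_div ((dTr _ _ (by omega) (by omega) (by omega) (by omega)).fun_sub
        (differentiableAt_const _)) ((diffAt_coord i).fun_sub (diffAt_tval (N + 2))) hneN2,
      pd_sub (dTr _ _ (by omega) (by omega) (by omega) (by omega)) (differentiableAt_const _),
      pd_const, pd_traceMul (hdA _ (by omega) (by omega)) (hdA _ (by omega) (by omega)),
      hPgen _ (by omega) (by omega), hPN2',
      pd_sub (diffAt_coord i) (diffAt_tval (N + 2)), pd_coord, pd_tval,
      if_neg hik0, if_neg (show ¬ N + 2 = ((⟨0, hN⟩ : Fin N) : ℕ) + 1 by omega)]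
    simp only [Finset.mul_sum, Matrix.trace_sum, trace_smul_mComm_mul, trace_mul_smul_mComm]
    have hmS : (i : ℕ) + 1 ∈ Icc 2 (N + 1) := by rw [mem_Icc]; omega
    rw [← Finset.sum_erase_add _ _ hmS,
      T_rep₁ (A ((i : ℕ) + 1) t) (A 1 t),
      T_cyc' (A (N + 2) t) (A 1 t) (A ((i : ℕ) + 1) t)]
    simp only [tval_coe, tval_end, sub_zero]
    rw [div_eq_div_iff (pow_ne_zero 2 hti) hti]
    ring

  -- cancellation
  have hsum0 : (∑ l ∈ (Icc 2 (N + 1)).erase ((i : ℕ) + 1),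
        -(tval t l * t ⟨0, hN⟩)⁻¹ * T (A ((i : ℕ) + 1) t) (A l t) (A 1 t)) / t i
      + ∑ j ∈ (Icc 2 (N + 1)).erase ((i : ℕ) + 1),
          (T (A ((i : ℕ) + 1) t) (A j t) (A 1 t) / (tval t j * t ⟨0, hN⟩)
            - T (A ((i : ℕ) + 1) t) (A j t) (A 1 t) / (t i * t ⟨0, hN⟩))
          / (t i - tval t j) = 0 := by
    rw [Finset.sum_div, ← Finset.sum_add_distrib]
    refine Finset.sum_eq_zero fun j hj => ?_
    rw [mem_erase, mem_Icc] at hj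
    have hs : tval t j ≠ 0 := gd_tval_ne_zero hgd (by omega) (by omega)
    have hxs : t i - tval t j ≠ 0 :=
      gd_sub_ne_zero hgd i (by omega) (by omega) (by omega)
    field_simp
    ring
  rw [hpdF, hpdden1, Finset.sum_congr rfl hGj, hGN2]
  have hclean : ∀ X Q : ℂ, (X * t i ^ 2 - Q * 0) / (t i ^ 2) ^ 2 = X / t i ^ 2 := by
    intro X Q
    rw [div_eq_div_iff (pow_ne_zero 2 hden1) hden1]
    ring
  rw [hclean]
  have hrest : (((A ((i : ℕ) + 1) t * A 1 t).trace
        + T (A ((i : ℕ) + 1) t) (A (N + 2) t) (A 1 t)) / t ⟨0, hN⟩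
          - θ ((i : ℕ) + 1)) / t i ^ 2
      + (-(T (A ((i : ℕ) + 1) t) (A (N + 2) t) (A 1 t) / (t i * t ⟨0, hN⟩))) / t i
      = ((A ((i : ℕ) + 1) t * A 1 t).trace - t ⟨0, hN⟩ * θ ((i : ℕ) + 1))
          / (t ⟨0, hN⟩ * t i ^ 2) := by
    field_simp
    ring
  linear_combination hsum0 + hrest


lemma L2b {U : Set (Fin N → ℂ)} (hUopen : IsOpen U)
    {A : ℕ → (Fin N → ℂ) → Matrix (Fin 2) (Fin 2) ℂ} {θ : ℕ → ℂ}
    (hsol : SolvesDegSch U A) {t : Fin N → ℂ} (ht : t ∈ U) (hgd : t ∈ goodDomain N)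
    (hN : 0 < N) (k : Fin N) (hk : (k : ℕ) ≠ 0) :
    fderiv ℂ (degSchH hN A θ (⟨0, hN⟩ : Fin N)) t (Pi.single k 1) =
      ((A 1 t * A ((k : ℕ) + 1) t).trace - t ⟨0, hN⟩ * θ ((k : ℕ) + 1))
        / (t ⟨0, hN⟩ * t k ^ 2) := by
  have hkN : (k : ℕ) < N := k.isLt
  have hdA : ∀ j, 1 ≤ j → j ≤ N + 2 → ∀ a b : Fin 2,
      DifferentiableAt ℂ (fun s => A j s a b) t := fun j h1 h2 a b =>
    (hsol.1 j (mem_Icc.mpr ⟨h1, h2⟩) a b).differentiableAt (hUopen.mem_nhds ht)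
  have dTr : ∀ p q, 1 ≤ p → p ≤ N + 2 → 1 ≤ q → q ≤ N + 2 →
      DifferentiableAt ℂ (fun s => (A p s * A q s).trace) t := fun p q h1 h2 h3 h4 =>
    diffAt_traceMul (hdA p h1 h2) (hdA q h3 h4)
  obtain ⟨hP1, hPj, hPN2⟩ := hsol.2 t ht k
  have hP1' : pder k (A 1) t = (t k)⁻¹ • mComm (A ((k : ℕ) + 1) t) (A 1 t) := by
    rw [hP1, if_neg hk]
  have hPn : pder k (A ((k : ℕ) + 1)) t
      = (∑ l ∈ (Icc 2 (N + 2)).erase ((k : ℕ) + 1),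
          (t k - tval t l)⁻¹ • mComm (A l t) (A ((k : ℕ) + 1) t))
        + ((t k) ^ 2)⁻¹ • mComm (A 1 t) (A ((k : ℕ) + 1) t) := by
    have h := hPj ((k : ℕ) + 1) (mem_Icc.mpr ⟨by omega, by omega⟩)
    rw [h, if_pos rfl, tval_coe k]
  have hPgen : ∀ j, 2 ≤ j → j ≤ N + 1 → j ≠ (k : ℕ) + 1 →
      pder k (A j) t = (-(tval t j - t k)⁻¹) • mComm (A ((k : ℕ) + 1) t) (A j t) := by
    intro j h2 h3 h4
    rw [hPj j (mem_Icc.mpr ⟨h2, h3⟩), if_neg (fun h => h4 h.symm), if_neg hk]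
  have hPN2' : pder k (A (N + 2)) t
      = ((t k) ^ 2)⁻¹ • mComm (A ((k : ℕ) + 1) t) (A 1 t)
        + (t k)⁻¹ • mComm (A ((k : ℕ) + 1) t) (A (N + 2) t) := by
    rw [hPN2, if_neg hk]
  have htk : t k ≠ 0 := gd_ne_zero hgd k
  have ht0 : t ⟨0, hN⟩ ≠ 0 := gd_ne_zero hgd _
  have h0k : ¬((⟨0, hN⟩ : Fin N) = k) := fun h => hk ((congrArg Fin.val h).symm)
  have hk0 : ((⟨0, hN⟩ : Fin N) : ℕ) = 0 := rfl
  have hH : degSchH hN A θ (⟨0, hN⟩ : Fin N) = fun s =>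
      -(A (N + 2) s).det / s ⟨0, hN⟩ -
        ∑ j ∈ Icc 2 (N + 1), ((A 1 s * A j s).trace - s ⟨0, hN⟩ * θ j)
          / (s ⟨0, hN⟩ * tval s j) := by
    funext s
    simp only [degSchH]
    rw [if_pos trivial]
  have dnumDet : DifferentiableAt ℂ (fun s => -(A (N + 2) s).det) t :=
    (diffAt_det (hdA (N + 2) (by omega) (by omega))).neg
  have dDet : DifferentiableAt ℂ (fun s => -(A (N + 2) s).det / s ⟨0, hN⟩) t :=
    diffAt_div dnumDet (diffAt_coord _) ht0
  have hdenj : ∀ j ∈ Icc 2 (N + 1), t ⟨0, hN⟩ * tval t j ≠ 0 := by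
    intro j hj
    rw [mem_Icc] at hj
    exact mul_ne_zero ht0 (gd_tval_ne_zero hgd (by omega) (by omega))
  have dG : ∀ j ∈ Icc 2 (N + 1), DifferentiableAt ℂ
      (fun s => ((A 1 s * A j s).trace - s ⟨0, hN⟩ * θ j)
        / (s ⟨0, hN⟩ * tval s j)) t := by
    intro j hj
    have hj' := hj
    rw [mem_Icc] at hj'
    exact diffAt_div ((dTr _ _ (by omega) (by omega) (by omega) (by omega)).sub
      ((diffAt_coord _).mul (differentiableAt_const _)))
      ((diffAt_coord _).mul (diffAt_tval j)) (hdenj j hj)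
  show pd k (degSchH hN A θ (⟨0, hN⟩ : Fin N)) t = _
  rw [hH, pd_sub dDet (DifferentiableAt.fun_sum dG), pd_sum _ _ dG,
    pd_div dnumDet (diffAt_coord _) ht0]
  have hnS : (k : ℕ) + 1 ∈ Icc 2 (N + 1) := by rw [mem_Icc]; omega
  rw [← Finset.sum_erase_add _ _ hnS]
  -- derivative of the determinant term
  have hdet : pd k (fun s => -(A (N + 2) s).det) t
      = T (A 1 t) (A (N + 2) t) (A ((k : ℕ) + 1) t) / t k ^ 2 := by
    rw [pd_neg, pd_det (hdA (N + 2) (by omega) (by omega)), hPN2']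
    simp only [Matrix.trace_add, Matrix.trace_smul, trace_mComm, smul_eq_mul, mul_zero,
      add_zero, Matrix.mul_add, trace_mul_smul_mComm]
    rw [T_rep₂ (A (N + 2) t) (A ((k : ℕ) + 1) t),
      T_cyc' (A (N + 2) t) (A ((k : ℕ) + 1) t) (A 1 t)]
    simp only [div_eq_mul_inv]
    ring
  have hpdden : pd k (fun s : Fin N → ℂ => s ⟨0, hN⟩) t = 0 := by
    rw [pd_coord, if_neg h0k]
  -- generic sum terms
  have hGj : ∀ j ∈ (Icc 2 (N + 1)).erase ((k : ℕ) + 1),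
      pd k (fun s => ((A 1 s * A j s).trace - s ⟨0, hN⟩ * θ j)
        / (s ⟨0, hN⟩ * tval s j)) t
      = (T (A 1 t) (A j t) (A ((k : ℕ) + 1) t) / t k
          + T (A 1 t) (A j t) (A ((k : ℕ) + 1) t) / (tval t j - t k))
        / (t ⟨0, hN⟩ * tval t j) := by
    intro j hj
    rw [mem_erase, mem_Icc] at hj
    obtain ⟨hjn, hj2, hjle⟩ := hj
    have hjmem : j ∈ Icc 2 (N + 1) := by rw [mem_Icc]; omega
    have hD := hdenj j hjmem
    rw [pd_div ((dTr _ _ (by omega) (by omega) (by omega) (by omega)).fun_sub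
        ((diffAt_coord _).fun_mul (differentiableAt_const _)))
        ((diffAt_coord _).fun_mul (diffAt_tval j)) hD,
      pd_sub (dTr _ _ (by omega) (by omega) (by omega) (by omega))
        ((diffAt_coord _).fun_mul (differentiableAt_const _)),
      pd_traceMul (hdA _ (by omega) (by omega)) (hdA _ (by omega) (by omega)),
      hP1', hPgen j (by omega) (by omega) (by omega),
      pd_mul (diffAt_coord _) (differentiableAt_const _), pd_const,
      pd_mul (diffAt_coord _) (diffAt_tval j), pd_coord, if_neg h0k, pd_tval,
      if_neg (show ¬ j = (k : ℕ) + 1 by omega),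
      trace_smul_mComm_mul, trace_mul_smul_mComm,
      T_cyc' (A j t) (A ((k : ℕ) + 1) t) (A 1 t),
      T_swap (A 1 t) (A j t) (A ((k : ℕ) + 1) t)]
    rw [div_eq_div_iff (pow_ne_zero 2 hD) hD]
    ring
  -- the j = k+1 term
  have hGn : pd k (fun s => ((A 1 s * A ((k : ℕ) + 1) s).trace - s ⟨0, hN⟩ * θ ((k : ℕ) + 1))
        / (s ⟨0, hN⟩ * tval s ((k : ℕ) + 1))) t
      = ((∑ l ∈ (Icc 2 (N + 1)).erase ((k : ℕ) + 1),
            (t k - tval t l)⁻¹ * T (A 1 t) (A l t) (A ((k : ℕ) + 1) t))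
          + T (A 1 t) (A (N + 2) t) (A ((k : ℕ) + 1) t) / t k) / (t ⟨0, hN⟩ * t k)
        - ((A 1 t * A ((k : ℕ) + 1) t).trace - t ⟨0, hN⟩ * θ ((k : ℕ) + 1))
          / (t ⟨0, hN⟩ * t k ^ 2) := by
    have hDn : t ⟨0, hN⟩ * tval t ((k : ℕ) + 1) ≠ 0 := hdenj _ hnS
    rw [pd_div ((dTr _ _ (by omega) (by omega) (by omega) (by omega)).fun_sub
        ((diffAt_coord _).fun_mul (differentiableAt_const _)))
        ((diffAt_coord _).fun_mul (diffAt_tval ((k : ℕ) + 1))) hDn,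
      pd_sub (dTr _ _ (by omega) (by omega) (by omega) (by omega))
        ((diffAt_coord _).fun_mul (differentiableAt_const _)),
      pd_traceMul (hdA _ (by omega) (by omega)) (hdA _ (by omega) (by omega)),
      hP1', hPn,
      pd_mul (diffAt_coord _) (differentiableAt_const _), pd_const,
      pd_mul (diffAt_coord _) (diffAt_tval ((k : ℕ) + 1)), pd_coord, if_neg h0k, pd_tval,
      if_pos rfl]
    simp only [Matrix.mul_add, Matrix.trace_add, Finset.mul_sum, Matrix.trace_sum,
      trace_smul_mComm_mul, trace_mul_smul_mComm]
    have hN2S' : N + 2 ∈ (Icc 2 (N + 2)).erase ((k : ℕ) + 1) := by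
      rw [mem_erase, mem_Icc]; omega
    rw [← Finset.sum_erase_add _ _ hN2S']
    have hsets : ((Icc 2 (N + 2)).erase ((k : ℕ) + 1)).erase (N + 2)
        = (Icc 2 (N + 1)).erase ((k : ℕ) + 1) := by
      ext x
      simp only [mem_erase, mem_Icc]
      omega
    rw [hsets, T_rep₁ (A ((k : ℕ) + 1) t) (A 1 t), T_rep₁ (A 1 t) (A ((k : ℕ) + 1) t)]
    simp only [tval_coe, tval_end, sub_zero]
    rw [div_sub_div _ _ (mul_ne_zero ht0 htk) (mul_ne_zero ht0 (pow_ne_zero 2 htk)),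
      div_eq_div_iff (pow_ne_zero 2 (mul_ne_zero ht0 htk))
        (mul_ne_zero (mul_ne_zero ht0 htk) (mul_ne_zero ht0 (pow_ne_zero 2 htk)))]
    ring
  -- cancellation
  have hsum0 : ∑ j ∈ (Icc 2 (N + 1)).erase ((k : ℕ) + 1),
        (T (A 1 t) (A j t) (A ((k : ℕ) + 1) t) / t k
          + T (A 1 t) (A j t) (A ((k : ℕ) + 1) t) / (tval t j - t k))
          / (t ⟨0, hN⟩ * tval t j)
      + (∑ l ∈ (Icc 2 (N + 1)).erase ((k : ℕ) + 1),
          (t k - tval t l)⁻¹ * T (A 1 t) (A l t) (A ((k : ℕ) + 1) t))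
        / (t ⟨0, hN⟩ * t k) = 0 := by
    rw [Finset.sum_div, ← Finset.sum_add_distrib]
    refine Finset.sum_eq_zero fun j hj => ?_
    rw [mem_erase, mem_Icc] at hj
    have hs : tval t j ≠ 0 := gd_tval_ne_zero hgd (by omega) (by omega)
    have hks : t k - tval t j ≠ 0 :=
      gd_sub_ne_zero hgd k (by omega) (by omega) (by omega)
    have hks' : tval t j - t k ≠ 0 := fun h => hks (by linear_combination -h)
    field_simp
    ring
  rw [hdet, hpdden, Finset.sum_congr rfl hGj, hGn]
  have hclean : ∀ X Q : ℂ, (X * t ⟨0, hN⟩ - Q * 0) / (t ⟨0, hN⟩) ^ 2 = X / t ⟨0, hN⟩ := by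
    intro X Q
    rw [div_eq_div_iff (pow_ne_zero 2 ht0) ht0]
    ring
  rw [hclean]
  have hrest : (T (A 1 t) (A (N + 2) t) (A ((k : ℕ) + 1) t) / t k ^ 2) / t ⟨0, hN⟩
      - (T (A 1 t) (A (N + 2) t) (A ((k : ℕ) + 1) t) / t k) / (t ⟨0, hN⟩ * t k) = 0 := by
    field_simp
    ring
  linear_combination hrest - hsum0


end DegSchAux

/-- **Closedness of the τ-form for the degenerate Schlesinger system** (Proposition 2.1):
if `A_1, …, A_{N+2}` solve `S(1,…,1,2;N)` on a connected open `U` contained in the good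
domain, with `tr A_1 = t_1`, `tr A_j = θ_j` constant for `j = 2, …, N+2`, `det A_j = 0`
for `j = 1, …, N+1`, `tr(A_1 A_{N+2}) = t_1 θ_{N+2}`, and
`−Σ_{j=2}^{N+2} A_j = diag(ρ, ρ + θ_{N+3})` constant, then the 1-form
`ω_0 = Σ_i H_i dt_i` is closed: `∂H_i/∂t_k = ∂H_k/∂t_i` on `U`. -/
theorem degSch_tau_form_closed (N : ℕ) (hN : 0 < N) (U : Set (Fin N → ℂ))
    (hUopen : IsOpen U) (hUconn : IsConnected U) (hUsub : U ⊆ goodDomain N)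
    (A : ℕ → (Fin N → ℂ) → Matrix (Fin 2) (Fin 2) ℂ) (θ : ℕ → ℂ) (ρ : ℂ)
    (hsol : SolvesDegSch U A)
    (htr1 : ∀ t ∈ U, (A 1 t).trace = t ⟨0, hN⟩)
    (htr : ∀ j ∈ Icc 2 (N + 2), ∀ t ∈ U, (A j t).trace = θ j)
    (hdet : ∀ j ∈ Icc 1 (N + 1), ∀ t ∈ U, (A j t).det = 0)
    (hpair : ∀ t ∈ U, (A 1 t * A (N + 2) t).trace = t ⟨0, hN⟩ * θ (N + 2))
    (hinf : ∀ t ∈ U, (-∑ j ∈ Icc 2 (N + 2), A j t) = !![ρ, 0; 0, ρ + θ (N + 3)]) :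
    ∀ t ∈ U, ∀ i k : Fin N,
      fderiv ℂ (degSchH hN A θ i) t (Pi.single k 1) =
        fderiv ℂ (degSchH hN A θ k) t (Pi.single i 1) := by
  intro t ht i k
  have hgd : t ∈ goodDomain N := hUsub ht
  by_cases hik : i = k
  · rw [hik]
  · by_cases hi : (i : ℕ) = 0
    · by_cases hk : (k : ℕ) = 0
      · exact absurd (Fin.ext (hi.trans hk.symm)) hik
      · have hieq : i = (⟨0, hN⟩ : Fin N) := Fin.ext hi
        rw [hieq, DegSchAux.L2b hUopen hsol ht hgd hN k hk,
          DegSchAux.L2a hUopen hsol ht hgd hN k hk, Matrix.trace_mul_comm]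
    · by_cases hk : (k : ℕ) = 0
      · have hkeq : k = (⟨0, hN⟩ : Fin N) := Fin.ext hk
        rw [hkeq, DegSchAux.L2a hUopen hsol ht hgd hN i hi,
          DegSchAux.L2b hUopen hsol ht hgd hN i hi, Matrix.trace_mul_comm]
      · rw [DegSchAux.L1 hUopen hsol ht hgd hN i k hi hk hik,
          DegSchAux.L1 hUopen hsol ht hgd hN k i hk hi (Ne.symm hik),
          show (A ((k : ℕ) + 1) t * A ((i : ℕ) + 1) t).trace
            = (A ((i : ℕ) + 1) t * A ((k : ℕ) + 1) t).trace from Matrix.trace_mul_comm _ _,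
          show (t k - t i) ^ 2 = (t i - t k) ^ 2 from by ring,
          mul_comm (θ ((k : ℕ) + 1))]
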